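/- Let M be a loopless matroid on a nonempty finite ground set E with rank function r. There exist an integer k ≥ 1, a chain of sets ∅ = F_0 ⊊ F_1 ⊊ ⋯ ⊊ F_k = E, and real numbers λ_1 > λ_2 > ⋯ > λ_k ≥ 1 such that: (1) for each 1 ≤ i ≤ k, F_{i−1} is the unique minimal minimizer and F_i is the unique maximal minimizer of the function f_{λ_i}(X) = λ_i · r(X) − |X| over all X ⊆ E; and (2) the values λ_1, …, λ_k are exactly the real numbers λ for which f_λ(X) = λ · r(X) − |X| admits more than one minimizer over subsets of E. -/

import Mathlib

/-- A matroid on a finite ground set `E`, given by its rank function `r`,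
where `r X` is the size of a largest independent subset of `X`. -/
structure FinMatroid (α : Type*) [DecidableEq α] where
  E : Finset α
  r : Finset α → ℕ
  r_empty : r ∅ = 0
  r_le_card : ∀ X : Finset α, r X ≤ X.card
  r_mono : ∀ ⦃X Y : Finset α⦄, X ⊆ Y → r X ≤ r Y
  r_submod : ∀ X Y : Finset α, r (X ∪ Y) + r (X ∩ Y) ≤ r X + r Y

/-- A matroid is loopless if every singleton of the ground set is independent. -/
def FinMatroid.Loopless {α : Type*} [DecidableEq α] (M : FinMatroid α) : Prop :=
  ∀ e ∈ M.E, M.r {e} = 1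

/-- `A` is a minimizer of the set function `f_λ(X) = λ·r(X) − |X|` over subsets of `E`. -/
def IsMinimizer {α : Type*} [DecidableEq α] (M : FinMatroid α) (lam : ℝ) (A : Finset α) : Prop :=
  A ⊆ M.E ∧ ∀ X ⊆ M.E, lam * (M.r A : ℝ) - (A.card : ℝ) ≤ lam * (M.r X : ℝ) - (X.card : ℝ)

namespace PrincipalSeq

attribute [local instance] Classical.propDecidable

variable {α : Type*} [DecidableEq α] (M : FinMatroid α)

lemma exists_minimizer (l : ℝ) : ∃ A, IsMinimizer M l A := by
  obtain ⟨A, hA, hAmin⟩ := M.E.powerset.exists_min_image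
    (fun X => l * (M.r X : ℝ) - (X.card : ℝ)) ⟨∅, Finset.mem_powerset.2 (Finset.empty_subset _)⟩
  exact ⟨A, Finset.mem_powerset.1 hA, fun X hX => hAmin X (Finset.mem_powerset.2 hX)⟩

lemma r_sub {X Y : Finset α} (hXY : X ⊆ Y) :
    (M.r Y : ℝ) ≤ (M.r X : ℝ) + ((Y.card : ℝ) - (X.card : ℝ)) := by
  have h2 := M.r_submod X (Y \ X)
  rw [Finset.union_sdiff_of_subset hXY, Finset.inter_sdiff_self, M.r_empty] at h2
  have h4 := M.r_le_card (Y \ X)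
  have h5 : (Y \ X).card = Y.card - X.card := Finset.card_sdiff_of_subset hXY
  have h6 := Finset.card_le_card hXY
  have : M.r Y ≤ M.r X + (Y.card - X.card) := by omega
  have := (Nat.cast_le (α := ℝ)).2 this
  push_cast at this
  rw [Nat.cast_sub h6] at this
  push_cast at this
  linarith

lemma minimizer_lt_one {l : ℝ} (hl : l < 1) :
    IsMinimizer M l M.E ∧ ∀ X, IsMinimizer M l X → X = M.E := by
  have key : ∀ X, X ⊆ M.E → X ≠ M.E →
      l * (M.r M.E : ℝ) - (M.E.card : ℝ) < l * (M.r X : ℝ) - (X.card : ℝ) := by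
    intro X hXE hne
    have hmono : (M.r X : ℝ) ≤ (M.r M.E : ℝ) := Nat.cast_le.2 (M.r_mono hXE)
    have hrs := r_sub M hXE
    have hcard : (X.card : ℝ) < (M.E.card : ℝ) := by
      exact_mod_cast Finset.card_lt_card (lt_of_le_of_ne hXE hne)
    rcases eq_or_lt_of_le hmono with h | h
    · rw [h]; linarith
    · nlinarith [mul_lt_mul_of_pos_right hl (sub_pos.2 h)]
  constructor
  · refine ⟨subset_rfl, fun X hX => ?_⟩
    rcases eq_or_ne X M.E with rfl | hne
    · exact le_refl _
    · exact (key X hX hne).le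
  · intro X hX
    by_contra hne
    have h1 := key X hX.1 hne
    have h2 := hX.2 M.E subset_rfl
    linarith

lemma r_pos (hloop : M.Loopless) {X : Finset α} (hXE : X ⊆ M.E) (hX : X.Nonempty) :
    1 ≤ M.r X := by
  obtain ⟨e, he⟩ := hX
  have h1 : M.r {e} = 1 := hloop e (hXE he)
  have h2 := M.r_mono (Finset.singleton_subset_iff.2 he)
  omega

lemma minimizer_big (hloop : M.Loopless) :
    IsMinimizer M ((M.E.card : ℝ) + 1) ∅ ∧
      ∀ X, IsMinimizer M ((M.E.card : ℝ) + 1) X → X = ∅ := by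
  have key : ∀ X, X ⊆ M.E → X ≠ ∅ →
      ((M.E.card : ℝ) + 1) * (M.r ∅ : ℝ) - ((∅ : Finset α).card : ℝ) <
        ((M.E.card : ℝ) + 1) * (M.r X : ℝ) - (X.card : ℝ) := by
    intro X hXE hne
    have hr1 : 1 ≤ M.r X := r_pos M hloop hXE (Finset.nonempty_of_ne_empty hne)
    have hr1' : (1 : ℝ) ≤ (M.r X : ℝ) := by exact_mod_cast hr1
    have hc : (X.card : ℝ) ≤ (M.E.card : ℝ) := by exact_mod_cast Finset.card_le_card hXE
    have hc0 : (0 : ℝ) ≤ (M.E.card : ℝ) := by positivity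
    rw [M.r_empty, Finset.card_empty]
    push_cast
    nlinarith
  constructor
  · refine ⟨Finset.empty_subset _, fun X hX => ?_⟩
    rcases eq_or_ne X ∅ with rfl | hne
    · exact le_refl _
    · exact (key X hX hne).le
  · intro X hX
    by_contra hne
    have h1 := key X hX.1 hne
    have h2 := hX.2 ∅ (Finset.empty_subset _)
    linarith

lemma minimizer_inter_union {l : ℝ} (hl : 0 ≤ l) {A B : Finset α}
    (hA : IsMinimizer M l A) (hB : IsMinimizer M l B) :
    IsMinimizer M l (A ∩ B) ∧ IsMinimizer M l (A ∪ B) := by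
  have hIE : A ∩ B ⊆ M.E := (Finset.inter_subset_left).trans hA.1
  have hUE : A ∪ B ⊆ M.E := Finset.union_subset hA.1 hB.1
  have h1 := hA.2 (A ∩ B) hIE
  have h2 := hB.2 (A ∪ B) hUE
  have h3 := hA.2 B hB.1
  have h4 := hB.2 A hA.1
  have hsub : (M.r (A ∪ B) : ℝ) + (M.r (A ∩ B) : ℝ) ≤ (M.r A : ℝ) + (M.r B : ℝ) := by
    exact_mod_cast M.r_submod A B
  have hcard : ((A ∪ B).card : ℝ) + ((A ∩ B).card : ℝ) = (A.card : ℝ) + (B.card : ℝ) := by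
    exact_mod_cast Finset.card_union_add_card_inter A B
  have hsub' : l * ((M.r (A ∪ B) : ℝ) + (M.r (A ∩ B) : ℝ)) ≤ l * ((M.r A : ℝ) + (M.r B : ℝ)) :=
    mul_le_mul_of_nonneg_left hsub hl
  have hI : l * (M.r (A ∩ B) : ℝ) - ((A ∩ B).card : ℝ) = l * (M.r A : ℝ) - (A.card : ℝ) := by
    nlinarith
  have hU : l * (M.r (A ∪ B) : ℝ) - ((A ∪ B).card : ℝ) = l * (M.r A : ℝ) - (A.card : ℝ) := by
    nlinarith
  exact ⟨⟨hIE, fun X hX => hI ▸ hA.2 X hX⟩, ⟨hUE, fun X hX => hU ▸ hA.2 X hX⟩⟩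

lemma cross {lam mu : ℝ} (hmu : 0 ≤ mu) (hlt : mu < lam) {A B : Finset α}
    (hA : IsMinimizer M lam A) (hB : IsMinimizer M mu B) : A ⊆ B := by
  have hIE : A ∩ B ⊆ M.E := (Finset.inter_subset_left).trans hA.1
  have hUE : A ∪ B ⊆ M.E := Finset.union_subset hA.1 hB.1
  have h1 := hA.2 (A ∩ B) hIE
  have h2 := hB.2 (A ∪ B) hUE
  have hsub : (M.r (A ∪ B) : ℝ) + (M.r (A ∩ B) : ℝ) ≤ (M.r A : ℝ) + (M.r B : ℝ) := by
    exact_mod_cast M.r_submod A B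
  have hcard : ((A ∪ B).card : ℝ) + ((A ∩ B).card : ℝ) = (A.card : ℝ) + (B.card : ℝ) := by
    exact_mod_cast Finset.card_union_add_card_inter A B
  have hm1 : (M.r (A ∩ B) : ℝ) ≤ (M.r A : ℝ) := by
    exact_mod_cast M.r_mono (Finset.inter_subset_left)
  have hm2 : (M.r B : ℝ) ≤ (M.r (A ∪ B) : ℝ) := by
    exact_mod_cast M.r_mono (Finset.subset_union_right)
  -- derive r(A∩B) = r A
  have hai : (M.r A : ℝ) ≤ (M.r (A ∩ B) : ℝ) := by
    nlinarith [mul_le_mul_of_nonneg_left hsub hmu]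
  have hu : (M.r (A ∪ B) : ℝ) ≤ (M.r B : ℝ) := by linarith
  have hcu : ((A ∪ B).card : ℝ) ≤ (B.card : ℝ) := by nlinarith
  have hcu' : (A ∪ B).card ≤ B.card := by exact_mod_cast hcu
  have : B = A ∪ B := Finset.eq_of_subset_of_card_le (Finset.subset_union_right) hcu'
  exact Finset.union_eq_right.1 this.symm

lemma exists_minMin {l : ℝ} (hl : 0 ≤ l) :
    ∃ A, IsMinimizer M l A ∧ ∀ X, IsMinimizer M l X → A ⊆ X := by
  classical
  obtain ⟨A0, hA0⟩ := exists_minimizer M l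
  obtain ⟨A, hAmem, hAmin⟩ := (M.E.powerset.filter (fun X => IsMinimizer M l X)).exists_min_image
    (fun X => X.card) ⟨A0, Finset.mem_filter.2 ⟨Finset.mem_powerset.2 hA0.1, hA0⟩⟩
  have hA : IsMinimizer M l A := (Finset.mem_filter.1 hAmem).2
  refine ⟨A, hA, fun X hX => ?_⟩
  have hint := (minimizer_inter_union M hl hA hX).1
  have h1 := hAmin (A ∩ X) (Finset.mem_filter.2 ⟨Finset.mem_powerset.2 hint.1, hint⟩)
  have h2 : A ∩ X = A :=
    Finset.eq_of_subset_of_card_le (Finset.inter_subset_left) h1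
  exact h2 ▸ Finset.inter_subset_right

lemma exists_maxMin {l : ℝ} (hl : 0 ≤ l) :
    ∃ A, IsMinimizer M l A ∧ ∀ X, IsMinimizer M l X → X ⊆ A := by
  classical
  obtain ⟨A0, hA0⟩ := exists_minimizer M l
  obtain ⟨A, hAmem, hAmin⟩ := (M.E.powerset.filter (fun X => IsMinimizer M l X)).exists_max_image
    (fun X => X.card) ⟨A0, Finset.mem_filter.2 ⟨Finset.mem_powerset.2 hA0.1, hA0⟩⟩
  have hA : IsMinimizer M l A := (Finset.mem_filter.1 hAmem).2
  refine ⟨A, hA, fun X hX => ?_⟩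
  have huni := (minimizer_inter_union M hl hA hX).2
  have h1 := hAmin (A ∪ X) (Finset.mem_filter.2 ⟨Finset.mem_powerset.2 huni.1, huni⟩)
  have h2 : A ∪ X = A :=
    (Finset.eq_of_subset_of_card_le (Finset.subset_union_left) h1).symm
  exact h2 ▸ Finset.subset_union_right

lemma gap : ∀ d : ℕ, ∀ (lam mu : ℝ) (A B : Finset α), 0 ≤ mu → mu < lam →
    IsMinimizer M lam A → IsMinimizer M mu B → A ⊂ B → B.card ≤ A.card + d →
    ∃ ν X Y, mu ≤ ν ∧ ν ≤ lam ∧ IsMinimizer M ν X ∧ IsMinimizer M ν Y ∧ X ⊂ Y ∧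
      A ⊆ X ∧ Y ⊆ B := by
  intro d
  induction d with
  | zero =>
    intro lam mu A B _ _ _ _ hAB hcard
    have := Finset.card_lt_card hAB
    omega
  | succ d ih =>
    intro lam mu A B hmu0 hmulam hA hB hAB hcard
    have hABsub : A ⊆ B := hAB.subset
    have hcAB : A.card < B.card := Finset.card_lt_card hAB
    have hcABr : (A.card : ℝ) < (B.card : ℝ) := by exact_mod_cast hcAB
    have hrAB : M.r A < M.r B := by
      have hmono := M.r_mono hABsub
      rcases eq_or_lt_of_le hmono with h | h
      · exfalso
        have h1 := hA.2 B hB.1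
        rw [h] at h1
        linarith
      · exact h
    have hrABr : (M.r A : ℝ) < (M.r B : ℝ) := by exact_mod_cast hrAB
    have hden : (0 : ℝ) < (M.r B : ℝ) - (M.r A : ℝ) := by linarith
    set ν : ℝ := ((B.card : ℝ) - (A.card : ℝ)) / ((M.r B : ℝ) - (M.r A : ℝ)) with hνdef
    have hνmul : ν * ((M.r B : ℝ) - (M.r A : ℝ)) = (B.card : ℝ) - (A.card : ℝ) :=
      div_mul_cancel₀ _ (ne_of_gt hden)
    have hνlam : ν ≤ lam := by
      rw [hνdef, div_le_iff₀ hden]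
      have h1 := hA.2 B hB.1
      linarith
    have hμν : mu ≤ ν := by
      rw [hνdef, le_div_iff₀ hden]
      have h1 := hB.2 A hA.1
      linarith
    have hfeq : ν * (M.r A : ℝ) - (A.card : ℝ) = ν * (M.r B : ℝ) - (B.card : ℝ) := by
      nlinarith [hνmul]
    rcases eq_or_lt_of_le hνlam with hc1 | hc1
    · -- ν = lam : B is also a minimizer at lam
      subst hc1
      refine ⟨ν, A, B, hμν, le_refl _, hA, ⟨hB.1, fun X hX => ?_⟩, hAB, subset_rfl, subset_rfl⟩
      have := hA.2 X hX
      linarith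
    rcases eq_or_lt_of_le hμν with hc2 | hc2
    · -- ν = mu : A is also a minimizer at mu
      refine ⟨mu, A, B, le_refl _, le_of_lt hmulam, ⟨hA.1, fun X hX => ?_⟩, hB, hAB,
        subset_rfl, subset_rfl⟩
      have := hB.2 X hX
      rw [← hc2] at hfeq
      linarith
    · -- mu < ν < lam
      have hν0 : 0 ≤ ν := le_trans hmu0 hc2.le
      obtain ⟨C, hC⟩ := exists_minimizer M ν
      have hAC : A ⊆ C := cross M hν0 hc1 hA hC
      have hCB : C ⊆ B := cross M hmu0 hc2 hC hB
      have hCle := hC.2 A hA.1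
      rcases eq_or_lt_of_le hCle with heq | hlt
      · -- A and B are both minimizers at ν
        refine ⟨ν, A, B, hc2.le, hc1.le, ⟨hA.1, fun X hX => ?_⟩, ⟨hB.1, fun X hX => ?_⟩,
          hAB, subset_rfl, subset_rfl⟩
        · have := hC.2 X hX; linarith
        · have := hC.2 X hX; linarith
      · -- strict: recurse on (A, C)
        have hCneA : C ≠ A := by
          intro h; rw [h] at hlt; exact lt_irrefl _ hlt
        have hCneB : C ≠ B := by
          intro h
          rw [h] at hlt
          rw [hfeq] at hlt
          exact lt_irrefl _ hlt
        have hACss : A ⊂ C := ssubset_of_subset_of_ne hAC (Ne.symm hCneA)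
        have hCBss : C ⊂ B := ssubset_of_subset_of_ne hCB hCneB
        have hcC : C.card < B.card := Finset.card_lt_card hCBss
        obtain ⟨ν', X, Y, h1, h2, h3, h4, h5, h6, h7⟩ :=
          ih lam ν A C hν0 hc1 hA hC hACss (by omega)
        exact ⟨ν', X, Y, le_trans hc2.le h1, h2, h3, h4, h5, h6, h7.trans hCB⟩

def Crit (l : ℝ) : Prop :=
  ∃ X Y, IsMinimizer M l X ∧ IsMinimizer M l Y ∧ X ≠ Y

lemma crit_one_le {l : ℝ} (h : Crit M l) : 1 ≤ l := by
  by_contra hl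
  push_neg at hl
  obtain ⟨X, Y, hX, hY, hne⟩ := h
  have hu := (minimizer_lt_one M hl).2
  exact hne ((hu X hX).trans (hu Y hY).symm)

noncomputable def critSet : Finset ℝ :=
  Finset.filter (Crit M)
    ((M.E.powerset ×ˢ M.E.powerset).image fun p =>
      ((p.2.card : ℝ) - (p.1.card : ℝ)) / ((M.r p.2 : ℝ) - (M.r p.1 : ℝ)))

lemma crit_of_mem {l : ℝ} (h : l ∈ critSet M) : Crit M l :=
  (Finset.mem_filter.1 h).2

lemma mem_of_crit {l : ℝ} (h : Crit M l) : l ∈ critSet M := by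
  have hl1 : (1 : ℝ) ≤ l := crit_one_le M h
  have hl0 : (0 : ℝ) ≤ l := le_trans zero_le_one hl1
  obtain ⟨A, hA, hAmin⟩ := exists_minMin M hl0
  obtain ⟨B, hB, hBmax⟩ := exists_maxMin M hl0
  have hABsub : A ⊆ B := hBmax A hA
  have hABne : A ≠ B := by
    obtain ⟨X, Y, hX, hY, hne⟩ := h
    intro hEq
    apply hne
    have h1 : A ⊆ X := hAmin X hX
    have h2 : X ⊆ B := hBmax X hX
    have h3 : A ⊆ Y := hAmin Y hY
    have h4 : Y ⊆ B := hBmax Y hY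
    rw [hEq] at h1 h3
    exact (subset_antisymm h2 h1).trans (subset_antisymm h3 h4)
  have hAB : A ⊂ B := ssubset_of_subset_of_ne hABsub hABne
  have hcAB : (A.card : ℝ) < (B.card : ℝ) := by exact_mod_cast Finset.card_lt_card hAB
  have hfeq : l * (M.r A : ℝ) - (A.card : ℝ) = l * (M.r B : ℝ) - (B.card : ℝ) :=
    le_antisymm (hA.2 B hB.1) (hB.2 A hA.1)
  have hrne : (M.r A : ℝ) < (M.r B : ℝ) := by
    have hmono : (M.r A : ℝ) ≤ (M.r B : ℝ) := by exact_mod_cast M.r_mono hABsub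
    rcases eq_or_lt_of_le hmono with hh | hh
    · rw [hh] at hfeq; linarith
    · exact hh
  have hlval : l = ((B.card : ℝ) - (A.card : ℝ)) / ((M.r B : ℝ) - (M.r A : ℝ)) := by
    rw [eq_div_iff (by linarith)]
    linarith
  refine Finset.mem_filter.2 ⟨?_, h⟩
  refine Finset.mem_image.2 ⟨(A, B), Finset.mem_product.2
    ⟨Finset.mem_powerset.2 hA.1, Finset.mem_powerset.2 hB.1⟩, hlval.symm⟩

lemma crit_le_card {l : ℝ} (h : Crit M l) : l ≤ (M.E.card : ℝ) := by
  have hl1 : (1 : ℝ) ≤ l := crit_one_le M h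
  have hl0 : (0 : ℝ) ≤ l := le_trans zero_le_one hl1
  obtain ⟨A, hA, hAmin⟩ := exists_minMin M hl0
  obtain ⟨B, hB, hBmax⟩ := exists_maxMin M hl0
  have hABsub : A ⊆ B := hBmax A hA
  have hABne : A ≠ B := by
    obtain ⟨X, Y, hX, hY, hne⟩ := h
    intro hEq
    apply hne
    have h1 : A ⊆ X := hAmin X hX
    have h2 : X ⊆ B := hBmax X hX
    have h3 : A ⊆ Y := hAmin Y hY
    have h4 : Y ⊆ B := hBmax Y hY
    rw [hEq] at h1 h3
    exact (subset_antisymm h2 h1).trans (subset_antisymm h3 h4)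
  have hAB : A ⊂ B := ssubset_of_subset_of_ne hABsub hABne
  have hcAB : (A.card : ℝ) < (B.card : ℝ) := by exact_mod_cast Finset.card_lt_card hAB
  have hfeq : l * (M.r A : ℝ) - (A.card : ℝ) = l * (M.r B : ℝ) - (B.card : ℝ) :=
    le_antisymm (hA.2 B hB.1) (hB.2 A hA.1)
  have hrne : (M.r A : ℝ) + 1 ≤ (M.r B : ℝ) := by
    have hmono : (M.r A : ℝ) ≤ (M.r B : ℝ) := by exact_mod_cast M.r_mono hABsub
    rcases eq_or_lt_of_le hmono with hh | hh
    · rw [hh] at hfeq; linarith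
    · have : M.r A < M.r B := by exact_mod_cast hh
      exact_mod_cast this
  have hcB : (B.card : ℝ) ≤ (M.E.card : ℝ) := by exact_mod_cast Finset.card_le_card hB.1
  have hcA : (0 : ℝ) ≤ (A.card : ℝ) := by positivity
  nlinarith

lemma critSet_nonempty (hloop : M.Loopless) (hE : M.E.Nonempty) :
    (critSet M).Nonempty := by
  have hbig := minimizer_big M hloop
  have hsmall := minimizer_lt_one M (l := 1/2) (by norm_num)
  have hEE : (∅ : Finset α) ⊂ M.E := Finset.empty_ssubset.2 hE
  have hmulam : (1 / 2 : ℝ) < (M.E.card : ℝ) + 1 := by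
    have : (0:ℝ) ≤ (M.E.card : ℝ) := by positivity
    linarith
  obtain ⟨ν, X, Y, _, _, hX, hY, hXY, _, _⟩ :=
    gap M M.E.card ((M.E.card : ℝ) + 1) (1/2) ∅ M.E (by norm_num) hmulam
      hbig.1 hsmall.1 hEE (by simp)
  exact ⟨ν, mem_of_crit M ⟨X, Y, hX, hY, hXY.ne⟩⟩

noncomputable def maxMin (l : ℝ) : Finset α :=
  if h : ∃ A, IsMinimizer M l A ∧ ∀ X, IsMinimizer M l X → X ⊆ A then h.choose else ∅

lemma maxMin_spec {l : ℝ} (hl : 0 ≤ l) :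
    IsMinimizer M l (maxMin M l) ∧ ∀ X, IsMinimizer M l X → X ⊆ maxMin M l := by
  have h : ∃ A, IsMinimizer M l A ∧ ∀ X, IsMinimizer M l X → X ⊆ A := exists_maxMin M hl
  rw [maxMin, dif_pos h]
  exact h.choose_spec

end PrincipalSeq

open PrincipalSeq in
/-- Principal sequence of a loopless matroid: there are a chain
`∅ = F_0 ⊊ F_1 ⊊ ⋯ ⊊ F_k = E` and critical values `λ_1 > ⋯ > λ_k ≥ 1` such that
`F_{i−1}` and `F_i` are the unique minimal and maximal minimizers of
`f_{λ_i}(X) = λ_i·r(X) − |X|`, and the `λ_i` are exactly the values `λ` for which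
`f_λ` admits more than one minimizer. -/
theorem stmt2 {α : Type*} [DecidableEq α] (M : FinMatroid α)
    (hloop : M.Loopless) (hE : M.E.Nonempty) :
    ∃ (k : ℕ) (F : ℕ → Finset α) (lam : ℕ → ℝ),
      1 ≤ k ∧ F 0 = ∅ ∧ F k = M.E ∧
      (∀ i < k, F i ⊂ F (i + 1)) ∧
      (∀ i, 1 ≤ i → i < k → lam (i + 1) < lam i) ∧
      1 ≤ lam k ∧
      (∀ i, 1 ≤ i → i ≤ k →
        (IsMinimizer M (lam i) (F (i - 1)) ∧
          ∀ X, IsMinimizer M (lam i) X → F (i - 1) ⊆ X) ∧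
        (IsMinimizer M (lam i) (F i) ∧
          ∀ X, IsMinimizer M (lam i) X → X ⊆ F i)) ∧
      (∀ l : ℝ,
        (∃ X Y, IsMinimizer M l X ∧ IsMinimizer M l Y ∧ X ≠ Y) ↔
          ∃ i, 1 ≤ i ∧ i ≤ k ∧ l = lam i) := by
  classical
  set S : Finset ℝ := critSet M with hS
  have hSne : S.Nonempty := critSet_nonempty M hloop hE
  set L : List ℝ := S.sort (· ≤ ·) with hL
  set k : ℕ := L.length with hk
  have hk1 : 1 ≤ k := by
    rw [hk, hL, Finset.length_sort]
    exact Finset.card_pos.2 hSne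
  set lam : ℕ → ℝ := fun i => L.getD (k - i) 0 with hlam
  have hmem : ∀ i, 1 ≤ i → i ≤ k → lam i ∈ S := by
    intro i h1 h2
    have hlt : k - i < k := by omega
    rw [hlam]
    simp only
    rw [List.getD_eq_getElem L 0 hlt, ← Finset.mem_sort (α := ℝ) (· ≤ ·)]
    exact List.getElem_mem _
  have hsorted := Finset.sortedLT_sort S
  have hanti : ∀ i j, 1 ≤ i → i < j → j ≤ k → lam j < lam i := by
    intro i j h1 h2 h3
    have hi : k - i < k := by omega
    have hj : k - j < k := by omega
    have hij : k - j < k - i := by omega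
    rw [hlam]
    simp only
    rw [List.getD_eq_getElem L 0 hi, List.getD_eq_getElem L 0 hj]
    have := hsorted.getElem_lt_getElem_of_lt (hi := hj) (hj := hi) hij
    simpa [List.get_eq_getElem] using this
  have hsurj : ∀ l ∈ S, ∃ i, 1 ≤ i ∧ i ≤ k ∧ lam i = l := by
    intro l hl
    have hlL : l ∈ L := (Finset.mem_sort (α := ℝ) (· ≤ ·)).2 hl
    obtain ⟨⟨n, hn⟩, hget⟩ := List.mem_iff_get.1 hlL
    refine ⟨k - n, by omega, by omega, ?_⟩
    rw [hlam]
    simp only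
    have hnn : k - (k - n) = n := by omega
    rw [hnn, List.getD_eq_getElem L 0 hn]
    simpa [List.get_eq_getElem] using hget
  have hcrit : ∀ i, 1 ≤ i → i ≤ k → Crit M (lam i) :=
    fun i h1 h2 => crit_of_mem M (hmem i h1 h2)
  have h1le : ∀ i, 1 ≤ i → i ≤ k → 1 ≤ lam i :=
    fun i h1 h2 => crit_one_le M (hcrit i h1 h2)
  have h0le : ∀ i, 1 ≤ i → i ≤ k → 0 ≤ lam i :=
    fun i h1 h2 => le_trans zero_le_one (h1le i h1 h2)
  have hmaxspec : ∀ i, 1 ≤ i → i ≤ k →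
      IsMinimizer M (lam i) (maxMin M (lam i)) ∧
        ∀ X, IsMinimizer M (lam i) X → X ⊆ maxMin M (lam i) :=
    fun i h1 h2 => maxMin_spec M (h0le i h1 h2)
  have hlamtop : ∀ l ∈ S, l ≤ lam 1 := by
    intro l hl
    obtain ⟨i, hi1, hik, hieq⟩ := hsurj l hl
    rcases eq_or_lt_of_le hi1 with h | h
    · rw [← hieq, ← h]
    · rw [← hieq]
      exact (hanti 1 i le_rfl h hik).le
  have hlambot : ∀ l ∈ S, lam k ≤ l := by
    intro l hl
    obtain ⟨i, hi1, hik, hieq⟩ := hsurj l hl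
    rcases eq_or_lt_of_le hik with h | h
    · rw [← hieq, h]
    · rw [← hieq]
      exact (hanti i k hi1 h le_rfl).le
  -- ∅ is a minimizer at lam 1
  have hzero : IsMinimizer M (lam 1) ∅ := by
    obtain ⟨A, hA, hAmin⟩ := exists_minMin M (h0le 1 le_rfl hk1)
    rcases eq_or_ne A ∅ with rfl | hne
    · exact hA
    exfalso
    have hssub : (∅ : Finset α) ⊂ A := Finset.empty_ssubset.2 (Finset.nonempty_of_ne_empty hne)
    have hlt : lam 1 < (M.E.card : ℝ) + 1 :=
      lt_of_le_of_lt (crit_le_card M (hcrit 1 le_rfl hk1)) (by linarith)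
    obtain ⟨ν, X, Y, hν1, hν2, hX, hY, hXY, hAX, hYB⟩ :=
      gap M M.E.card ((M.E.card : ℝ) + 1) (lam 1) ∅ A (h0le 1 le_rfl hk1) hlt
        (minimizer_big M hloop).1 hA hssub
        (by have := Finset.card_le_card hA.1; simp; omega)
    have hνS : ν ∈ S := mem_of_crit M ⟨X, Y, hX, hY, hXY.ne⟩
    have hνeq : ν = lam 1 := le_antisymm (hlamtop ν hνS) hν1
    rw [hνeq] at hX hY
    exact hXY.ne (subset_antisymm hXY.subset ((hYB.trans (hAmin X hX))))
  -- consecutive gluing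
  have hglue : ∀ i, 2 ≤ i → i ≤ k →
      IsMinimizer M (lam i) (maxMin M (lam (i - 1))) ∧
        ∀ X, IsMinimizer M (lam i) X → maxMin M (lam (i - 1)) ⊆ X := by
    intro i h2 hik
    obtain ⟨B, hB, hBmin⟩ := exists_minMin M (h0le i (by omega) hik)
    have hAspec := hmaxspec (i - 1) (by omega) (by omega)
    have hlamlt : lam i < lam (i - 1) := hanti (i - 1) i (by omega) (by omega) hik
    have hAB : maxMin M (lam (i - 1)) ⊆ B :=
      cross M (h0le i (by omega) hik) hlamlt hAspec.1 hB
    suffices hAB2 : maxMin M (lam (i - 1)) = B by rw [hAB2]; exact ⟨hB, hBmin⟩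
    by_contra hne
    have hss : maxMin M (lam (i - 1)) ⊂ B := ssubset_of_subset_of_ne hAB hne
    obtain ⟨ν, X, Y, hν1, hν2, hX, hY, hXY, hAX, hYB⟩ :=
      gap M M.E.card (lam (i - 1)) (lam i) (maxMin M (lam (i - 1))) B
        (h0le i (by omega) hik) hlamlt hAspec.1 hB hss
        (by have := Finset.card_le_card hB.1; omega)
    have hνS : ν ∈ S := mem_of_crit M ⟨X, Y, hX, hY, hXY.ne⟩
    obtain ⟨j, hj1, hjk, hjeq⟩ := hsurj ν hνS
    have hji : i - 1 ≤ j := by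
      by_contra hcon
      push_neg at hcon
      have := hanti j (i - 1) hj1 (by omega) (by omega)
      linarith [hjeq ▸ hν2]
    have hij : j ≤ i := by
      by_contra hcon
      push_neg at hcon
      have := hanti i j (by omega) (by omega) hjk
      linarith [hjeq ▸ hν1]
    have hjcases : j = i - 1 ∨ j = i := by omega
    rcases hjcases with hj | hj
    · rw [← hjeq, hj] at hX hY
      have hYA : Y ⊆ maxMin M (lam (i - 1)) := hAspec.2 Y hY
      exact hXY.ne (subset_antisymm hXY.subset (hYA.trans hAX))
    · rw [← hjeq, hj] at hX hY
      have hBX : B ⊆ X := hBmin X hX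
      exact hXY.ne (subset_antisymm hXY.subset (hYB.trans hBX))
  -- top : maxMin (lam k) = E
  have htop : maxMin M (lam k) = M.E := by
    have hAspec := hmaxspec k hk1 le_rfl
    refine subset_antisymm hAspec.1.1 ?_
    by_contra hns
    have hssA : maxMin M (lam k) ⊂ M.E :=
      ssubset_of_subset_of_ne hAspec.1.1 (fun h => hns (h ▸ subset_rfl))
    obtain ⟨ν, X, Y, hν1, hν2, hX, hY, hXY, hAX, hYB⟩ :=
      gap M M.E.card (lam k) (1 / 2) (maxMin M (lam k)) M.E (by norm_num)
        (by linarith [h1le k hk1 le_rfl]) hAspec.1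
        (minimizer_lt_one M (by norm_num)).1 hssA
        (by omega)
    have hνS : ν ∈ S := mem_of_crit M ⟨X, Y, hX, hY, hXY.ne⟩
    have hνeq : ν = lam k := le_antisymm hν2 (hlambot ν hνS)
    rw [hνeq] at hX hY
    have hYA : Y ⊆ maxMin M (lam k) := hAspec.2 Y hY
    exact hXY.ne (subset_antisymm hXY.subset (hYA.trans hAX))
  -- strictness at each critical value
  have hstrict : ∀ i, 1 ≤ i → i ≤ k → ∀ B, IsMinimizer M (lam i) B →
      (∀ X, IsMinimizer M (lam i) X → B ⊆ X) → B ⊂ maxMin M (lam i) := by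
    intro i h1 h2 B hB hBmin
    have hAspec := hmaxspec i h1 h2
    refine ssubset_of_subset_of_ne (hAspec.2 B hB) ?_
    intro hEq
    obtain ⟨X, Y, hX, hY, hne⟩ := hcrit i h1 h2
    apply hne
    have hXB : X = B := subset_antisymm (hEq ▸ hAspec.2 X hX) (hBmin X hX)
    have hYB : Y = B := subset_antisymm (hEq ▸ hAspec.2 Y hY) (hBmin Y hY)
    rw [hXB, hYB]
  set F : ℕ → Finset α := fun i => if i = 0 then ∅ else maxMin M (lam i) with hF
  have hFpos : ∀ i, i ≠ 0 → F i = maxMin M (lam i) := by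
    intro i h
    rw [hF]
    simp [h]
  refine ⟨k, F, lam, hk1, by simp [hF], ?_, ?_, ?_, h1le k hk1 le_rfl, ?_, ?_⟩
  · rw [hFpos k (by omega)]
    exact htop
  · -- chain
    intro i hik
    rcases Nat.eq_zero_or_pos i with rfl | hpos
    · rw [hFpos 1 (by omega)]
      have h01 : F 0 = ∅ := by simp [hF]
      rw [h01]
      exact hstrict 1 le_rfl hk1 ∅ hzero (fun X _ => Finset.empty_subset X)
    · rw [hFpos i (by omega), hFpos (i + 1) (by omega)]
      have hg := hglue (i + 1) (by omega) (by omega)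
      have : (i + 1) - 1 = i := by omega
      rw [this] at hg
      exact hstrict (i + 1) (by omega) (by omega) (maxMin M (lam i)) hg.1 hg.2
  · -- decreasing
    intro i h1 h2
    exact hanti i (i + 1) h1 (by omega) (by omega)
  · -- minimal and maximal minimizers
    intro i h1 h2
    constructor
    · rcases eq_or_lt_of_le h1 with h | h
      · have : i - 1 = 0 := by omega
        rw [this]
        have h00 : F 0 = ∅ := by simp [hF]
        rw [h00, ← h]
        exact ⟨hzero, fun X _ => Finset.empty_subset X⟩
      · rw [hFpos (i - 1) (by omega)]
        exact hglue i (by omega) h2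
    · rw [hFpos i (by omega)]
      exact hmaxspec i h1 h2
  · -- characterization
    intro l
    constructor
    · intro h
      obtain ⟨i, hi1, hik, hieq⟩ := hsurj l (mem_of_crit M h)
      exact ⟨i, hi1, hik, hieq.symm⟩
    · rintro ⟨i, hi1, hik, rfl⟩
      exact hcrit i hi1 hik
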